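/- For n ≥ 3, the group SL(n,ℤ) is perfect, i.e., equal to its commutator subgroup. -/

import Mathlib

open Matrix Subgroup

namespace SL3Perfect

variable {n : ℕ}

abbrev SL (n : ℕ) := Matrix.SpecialLinearGroup (Fin n) ℤ

/-- A transvection as an element of `SL(n, ℤ)`. -/
def tv (i j : Fin n) (hij : i ≠ j) (c : ℤ) : SL n :=
  ⟨Matrix.transvection i j c, Matrix.det_transvection_of_ne i j hij c⟩

lemma tv_coe (i j : Fin n) (hij : i ≠ j) (c : ℤ) :
    (tv i j hij c).1 = Matrix.transvection i j c := rfl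

/-- The fundamental transvection commutator identity at the matrix level. -/
lemma tv_matrix_comm (i j k : Fin n) (hij : i ≠ j) (hik : i ≠ k) (hkj : k ≠ j) (c : ℤ) :
    transvection i k c * transvection k j 1 =
      transvection i j c * (transvection k j 1 * transvection i k c) := by
  simp only [transvection, Matrix.mul_add, Matrix.add_mul, Matrix.one_mul, Matrix.mul_one,
    single_mul_single_same, Matrix.single_mul_single_of_ne _ _ _ _ (Ne.symm hkj),
    Matrix.single_mul_single_of_ne _ _ _ _ hij, Matrix.single_mul_single_of_ne _ _ _ _ hkj,
    Matrix.single_mul_single_of_ne _ _ _ _ (Ne.symm hik), Matrix.single_mul_single_of_ne _ _ _ _ (Ne.symm hij),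
    mul_one, one_mul, Matrix.mul_zero, Matrix.zero_mul, add_zero]
  abel

open scoped commutatorElement in
/-- For `n ≥ 3`, every transvection lies in the commutator subgroup. -/
lemma tv_mem (hn : 3 ≤ n) (i j : Fin n) (hij : i ≠ j) (c : ℤ) :
    tv i j hij c ∈ commutator (SL n) := by
  -- find a third index
  have hcompl : (({i, j}ᶜ : Finset (Fin n))).Nonempty := by
    rw [← Finset.card_pos, Finset.card_compl]
    have h1 : ({i, j} : Finset (Fin n)).card ≤ 2 :=
      (Finset.card_insert_le _ _).trans (by simp)
    simp only [Fintype.card_fin]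
    omega
  obtain ⟨k, hk⟩ := hcompl
  simp only [Finset.mem_compl, Finset.mem_insert, Finset.mem_singleton, not_or] at hk
  obtain ⟨hki, hkj⟩ := hk
  have hik : i ≠ k := Ne.symm hki
  have hkj' : k ≠ j := hkj
  set a := tv i k hik c
  set b := tv k j hkj' 1
  have hmul : a * b = tv i j hij c * (b * a) :=
    Subtype.ext (tv_matrix_comm i j k hij hik hkj' c)
  have key : tv i j hij c = ⁅a, b⁆ := by
    rw [commutatorElement_def, hmul]
    group
  rw [_root_.commutator_def, key]
  exact Subgroup.commutator_mem_commutator (Subgroup.mem_top a) (Subgroup.mem_top b)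

/-- `A` agrees with the identity on the first `k` rows and columns. -/
def Id1 (k : ℕ) (A : SL n) : Prop :=
  ∀ i j : Fin n, ((i : ℕ) < k ∨ (j : ℕ) < k) → A.1 i j = if i = j then 1 else 0

lemma id1_left {k : ℕ} {a b : Fin n} (hab : a ≠ b) (ha : k ≤ (a : ℕ)) (hb : k ≤ (b : ℕ))
    (c : ℤ) {A : SL n} (hA : Id1 k A) : Id1 k (tv a b hab c * A) := by
  intro i j hij
  have hcoe : (tv a b hab c * A).1 = transvection a b c * A.1 := rfl
  rw [hcoe]
  rcases eq_or_ne i a with rfl | hia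
  · have hj : (j : ℕ) < k := by rcases hij with h | h <;> omega
    have hij' : i ≠ j := fun h => by subst h; omega
    have hbj : b ≠ j := fun h => by subst h; omega
    rw [transvection_mul_apply_same, hA i j (Or.inr hj), hA b j (Or.inr hj),
      if_neg hij', if_neg hbj]
    ring
  · rw [transvection_mul_apply_of_ne _ _ _ _ hia]
    exact hA i j hij

lemma id1_right {k : ℕ} {a b : Fin n} (hab : a ≠ b) (ha : k ≤ (a : ℕ)) (hb : k ≤ (b : ℕ))
    (c : ℤ) {A : SL n} (hA : Id1 k A) : Id1 k (A * tv a b hab c) := by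
  intro i j hij
  have hcoe : (A * tv a b hab c).1 = A.1 * transvection a b c := rfl
  rw [hcoe]
  rcases eq_or_ne j b with rfl | hjb
  · have hi : (i : ℕ) < k := by rcases hij with h | h <;> omega
    have hij' : i ≠ j := fun h => by subst h; omega
    have hia : i ≠ a := fun h => by subst h; omega
    rw [mul_transvection_apply_same, hA i j (Or.inl hi), hA i a (Or.inl hi),
      if_neg hij', if_neg hia]
    ring
  · rw [mul_transvection_apply_of_ne _ _ _ _ hjb]
    exact hA i j hij

/-- Row-clearing: if the column `κ = k` of `A` is the standard basis vector, then we can clear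
row `κ` by column operations and conclude from the `k+1` stage. -/
lemma rowstep (H : Subgroup (SL n)) (hT : ∀ (i j : Fin n) (hij : i ≠ j) (c : ℤ), tv i j hij c ∈ H)
    {k : ℕ} (hkn : k < n) (next : ∀ B : SL n, Id1 (k + 1) B → B ∈ H) :
    ∀ (m : ℕ) (A : SL n),
      (Finset.univ.filter fun j : Fin n => j ≠ ⟨k, hkn⟩ ∧ A.1 ⟨k, hkn⟩ j ≠ 0).card = m →
      Id1 k A → (∀ i, A.1 i ⟨k, hkn⟩ = if i = ⟨k, hkn⟩ then 1 else 0) → A ∈ H := by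
  intro m
  induction m using Nat.strong_induction_on with
  | _ m ih =>
    intro A hm hA hcol
    set κ : Fin n := ⟨k, hkn⟩ with hκdef
    by_cases hex : ∃ j : Fin n, j ≠ κ ∧ A.1 κ j ≠ 0
    · obtain ⟨j, hjκ, hj0⟩ := hex
      have hjk : k ≤ (j : ℕ) := by
        by_contra h
        push_neg at h
        have h2 := hA κ j (Or.inr h)
        rw [if_neg (Ne.symm hjκ)] at h2
        exact hj0 h2
      set B := A * tv κ j (Ne.symm hjκ) (-(A.1 κ j)) with hBdef
      have hBmat : B.1 = A.1 * transvection κ j (-(A.1 κ j)) := rfl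
      have hBrow : ∀ b : Fin n, b ≠ j → B.1 κ b = A.1 κ b := fun b hbj => by
        rw [hBmat, mul_transvection_apply_of_ne _ _ _ _ hbj]
      have hAκκ : A.1 κ κ = 1 := by rw [hcol κ, if_pos rfl]
      have hBj : B.1 κ j = 0 := by
        rw [hBmat, mul_transvection_apply_same, hAκκ]
        ring
      have hBcol : ∀ i, B.1 i κ = if i = κ then 1 else 0 := fun i => by
        rw [hBmat, mul_transvection_apply_of_ne _ _ _ _ (Ne.symm hjκ)]
        exact hcol i
      have hBid : Id1 k B := id1_right (Ne.symm hjκ) (le_of_eq rfl) hjk _ hA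
      have hsub : (Finset.univ.filter fun b : Fin n => b ≠ κ ∧ B.1 κ b ≠ 0) ⊂
          (Finset.univ.filter fun b : Fin n => b ≠ κ ∧ A.1 κ b ≠ 0) := by
        rw [Finset.ssubset_iff_of_subset]
        · refine ⟨j, Finset.mem_filter.mpr ⟨Finset.mem_univ j, hjκ, hj0⟩, ?_⟩
          intro hjmem
          have := (Finset.mem_filter.mp hjmem).2.2
          exact this hBj
        · intro b hb
          have hb' := (Finset.mem_filter.mp hb).2
          have hbj : b ≠ j := by
            rintro rfl
            exact hb'.2 hBj
          refine Finset.mem_filter.mpr ⟨Finset.mem_univ b, hb'.1, ?_⟩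
          have h2 := hb'.2
          rw [hBrow b hbj] at h2
          exact h2
      have hlt : (Finset.univ.filter fun b : Fin n => b ≠ κ ∧ B.1 κ b ≠ 0).card < m := by
        rw [← hm]
        exact Finset.card_lt_card hsub
      have hBH : B ∈ H := ih _ hlt B rfl hBid hBcol
      exact (H.mul_mem_cancel_right (hT κ j (Ne.symm hjκ) _)).mp hBH
    · push_neg at hex
      apply next
      intro i j hij
      by_cases h1 : (i : ℕ) < k ∨ (j : ℕ) < k
      · exact hA i j h1
      · push_neg at h1
        rcases hij with hi | hj
        · have hiκ : i = κ := Fin.ext (show (i : ℕ) = k by omega)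
          rw [hiκ]
          rcases eq_or_ne j κ with rfl | hjκ2
          · exact hcol κ
          · rw [hex j hjκ2, if_neg (Ne.symm hjκ2)]
        · have hjκ : j = κ := Fin.ext (show (j : ℕ) = k by omega)
          rw [hjκ]
          exact hcol i


/-- Column-clearing by the Euclidean algorithm on column `k`. -/
lemma colstep (H : Subgroup (SL n)) (hT : ∀ (i j : Fin n) (hij : i ≠ j) (c : ℤ), tv i j hij c ∈ H)
    {k : ℕ} (hkn : k < n) (next : ∀ B : SL n, Id1 (k + 1) B → B ∈ H) :
    ∀ (m : ℕ) (A : SL n), (∑ i : Fin n, (A.1 i ⟨k, hkn⟩).natAbs) = m → Id1 k A → A ∈ H := by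
  intro m
  induction m using Nat.strong_induction_on with
  | _ m ih =>
    intro A hm hA
    set κ : Fin n := ⟨k, hkn⟩ with hκdef
    have hκk : (κ : ℕ) = k := rfl
    have key : ∀ i : Fin n, A.1 i κ ≠ 0 → k ≤ (i : ℕ) := by
      intro i h0
      by_contra h
      push_neg at h
      have hiκ : i ≠ κ := by rintro rfl; omega
      have h2 := hA i κ (Or.inl h)
      rw [if_neg hiκ] at h2
      exact h0 h2
    by_cases hex : ∃ a b : Fin n, a ≠ b ∧ A.1 a κ ≠ 0 ∧ A.1 b κ ≠ 0 ∧
        (A.1 b κ).natAbs ≤ (A.1 a κ).natAbs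
    · obtain ⟨a, b, hab, ha0, hb0, hle⟩ := hex
      have hak := key a ha0
      have hbk := key b hb0
      set B := tv a b hab (-(A.1 a κ / A.1 b κ)) * A with hBdef
      have hBmat : B.1 = transvection a b (-(A.1 a κ / A.1 b κ)) * A.1 := rfl
      have hBa : B.1 a κ = A.1 a κ % A.1 b κ := by
        rw [hBmat, transvection_mul_apply_same, Int.emod_def]
        ring
      have hBo : ∀ i : Fin n, i ≠ a → B.1 i κ = A.1 i κ := fun i hia => by
        rw [hBmat, transvection_mul_apply_of_ne _ _ _ _ hia]
      have hlt : (∑ i : Fin n, (B.1 i κ).natAbs) < m := by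
        rw [← hm]
        apply Finset.sum_lt_sum
        · intro i _
          rcases eq_or_ne i a with rfl | hia
          · rw [hBa]
            have h1 := Int.emod_nonneg (A.1 i κ) hb0
            have h2 := Int.emod_lt (A.1 i κ) hb0
            omega
          · rw [hBo i hia]
        · refine ⟨a, Finset.mem_univ a, ?_⟩
          rw [hBa]
          have h1 := Int.emod_nonneg (A.1 a κ) hb0
          have h2 := Int.emod_lt (A.1 a κ) hb0
          omega
      have hBid : Id1 k B := id1_left hab hak hbk _ hA
      have hBH : B ∈ H := ih _ hlt B rfl hBid
      exact (H.mul_mem_cancel_left (hT a b hab _)).mp hBH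
    · push_neg at hex
      have hsingle : ∀ p q : Fin n, A.1 p κ ≠ 0 → A.1 q κ ≠ 0 → p = q := by
        intro p q hp hq
        by_contra hpq
        rcases le_total (A.1 q κ).natAbs (A.1 p κ).natAbs with h | h
        · have := hex p q hpq hp hq; omega
        · have := hex q p (Ne.symm hpq) hq hp; omega
      have hone : (∑ i : Fin n, (A.1).adjugate κ i * A.1 i κ) = 1 := by
        have h := Matrix.adjugate_mul A.1
        rw [A.2, one_smul] at h
        have h2 := congrFun (congrFun h κ) κ
        rw [Matrix.mul_apply, Matrix.one_apply_eq] at h2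
        exact h2
      by_cases hz : ∀ i : Fin n, A.1 i κ = 0
      · exfalso
        rw [Finset.sum_eq_zero (fun i _ => by rw [hz i, mul_zero])] at hone
        exact zero_ne_one hone
      · push_neg at hz
        obtain ⟨i₀, h0⟩ := hz
        have hzero : ∀ i : Fin n, i ≠ i₀ → A.1 i κ = 0 := by
          intro i hi
          by_contra h
          exact hi (hsingle i i₀ h h0)
        have hv : A.1 i₀ κ = 1 ∨ A.1 i₀ κ = -1 := by
          have hsum : (A.1).adjugate κ i₀ * A.1 i₀ κ = 1 := by
            rw [Finset.sum_eq_single i₀ (fun i _ hi => by rw [hzero i hi, mul_zero])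
              (fun h => absurd (Finset.mem_univ i₀) h)] at hone
            exact hone
          exact Int.isUnit_iff.mp (IsUnit.of_mul_eq_one _ (by rw [mul_comm]; exact hsum))
        have hi₀k := key i₀ h0
        rcases eq_or_ne i₀ κ with hiκ | hne
        · rw [hiκ] at hv hzero
          rcases hv with hv1 | hvm
          · apply rowstep H hT hkn next _ A rfl hA
            intro i
            rcases eq_or_ne i κ with rfl | hiκ2
            · rw [if_pos rfl]; exact hv1
            · rw [if_neg hiκ2]; exact hzero i hiκ2
          · by_cases hk1 : k + 1 < n
            · set j : Fin n := ⟨k + 1, hk1⟩ with hjdef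
              have hjκ : j ≠ κ := Fin.ne_of_val_ne (show k + 1 ≠ k by omega)
              have hAjκ : A.1 j κ = 0 := hzero j hjκ
              set B1 := tv j κ hjκ (-1) * A with hB1
              set B2 := tv κ j (Ne.symm hjκ) 2 * B1 with hB2
              set B3 := tv j κ hjκ (-1) * B2 with hB3
              have hB1mat : B1.1 = transvection j κ (-1) * A.1 := rfl
              have hB1j : B1.1 j κ = 1 := by
                rw [hB1mat, transvection_mul_apply_same, hAjκ, hvm]; norm_num
              have hB1o : ∀ i : Fin n, i ≠ j → B1.1 i κ = A.1 i κ := fun i hij => by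
                rw [hB1mat, transvection_mul_apply_of_ne _ _ _ _ hij]
              have hB2mat : B2.1 = transvection κ j 2 * B1.1 := rfl
              have hB2κ : B2.1 κ κ = 1 := by
                rw [hB2mat, transvection_mul_apply_same, hB1o κ (Ne.symm hjκ), hvm, hB1j]
                norm_num
              have hB2o : ∀ i : Fin n, i ≠ κ → B2.1 i κ = B1.1 i κ := fun i hiκ2 => by
                rw [hB2mat, transvection_mul_apply_of_ne _ _ _ _ hiκ2]
              have hB3mat : B3.1 = transvection j κ (-1) * B2.1 := rfl
              have hB3j : B3.1 j κ = 0 := by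
                rw [hB3mat, transvection_mul_apply_same, hB2o j hjκ, hB1j, hB2κ]; norm_num
              have hB3o : ∀ i : Fin n, i ≠ j → B3.1 i κ = B2.1 i κ := fun i hij => by
                rw [hB3mat, transvection_mul_apply_of_ne _ _ _ _ hij]
              have hcol3 : ∀ i : Fin n, B3.1 i κ = if i = κ then 1 else 0 := by
                intro i
                rcases eq_or_ne i j with rfl | hij2
                · rw [hB3j, if_neg hjκ]
                · rw [hB3o i hij2]
                  rcases eq_or_ne i κ with rfl | hiκ2
                  · rw [hB2κ, if_pos rfl]
                  · rw [hB2o i hiκ2, hB1o i hij2, hzero i hiκ2, if_neg hiκ2]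
              have hjk' : k ≤ (j : ℕ) := by show k ≤ k + 1; omega
              have hκk' : k ≤ (κ : ℕ) := le_of_eq rfl
              have hid3 : Id1 k B3 :=
                id1_left hjκ hjk' hκk' _ (id1_left (Ne.symm hjκ) hκk' hjk' _
                  (id1_left hjκ hjk' hκk' _ hA))
              have h3H : B3 ∈ H := rowstep H hT hkn next _ B3 rfl hid3 hcol3
              rw [hB3] at h3H
              have h2H : B2 ∈ H := (H.mul_mem_cancel_left (hT j κ hjκ _)).mp h3H
              rw [hB2] at h2H
              have h1H : B1 ∈ H := (H.mul_mem_cancel_left (hT κ j (Ne.symm hjκ) _)).mp h2H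
              rw [hB1] at h1H
              exact (H.mul_mem_cancel_left (hT j κ hjκ _)).mp h1H
            · exfalso
              have hdiag : A.1 =
                  Matrix.diagonal (fun i : Fin n => if i = κ then (-1 : ℤ) else 1) := by
                ext i j
                rcases eq_or_ne i j with rfl | hij2
                · rw [Matrix.diagonal_apply_eq]
                  rcases eq_or_ne i κ with rfl | hiκ2
                  · rw [if_pos rfl]; exact hvm
                  · rw [if_neg hiκ2]
                    have hik : (i : ℕ) < k := by
                      have h1 : (i : ℕ) < n := i.isLt
                      have h2 : (i : ℕ) ≠ k := fun h => hiκ2 (Fin.ext (h.trans hκk.symm))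
                      omega
                    have h3 := hA i i (Or.inl hik)
                    rw [if_pos rfl] at h3
                    exact h3
                · rw [Matrix.diagonal_apply_ne _ hij2]
                  have hor : (i : ℕ) < k ∨ (j : ℕ) < k := by
                    by_contra hcon
                    push_neg at hcon
                    have h1 : (i : ℕ) < n := i.isLt
                    have h2 : (j : ℕ) < n := j.isLt
                    exact hij2 (Fin.ext (by omega))
                  have h3 := hA i j hor
                  rw [if_neg hij2] at h3
                  exact h3
              have hdet := A.2
              rw [hdiag, Matrix.det_diagonal, Finset.prod_eq_single κ (fun i _ hi => if_neg hi)
                (fun h => absurd (Finset.mem_univ κ) h), if_pos rfl] at hdet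
              norm_num at hdet
        · have hAκκ : A.1 κ κ = 0 := hzero κ (Ne.symm hne)
          have hvv : A.1 i₀ κ * A.1 i₀ κ = 1 := by rcases hv with h | h <;> rw [h] <;> norm_num
          set B1 := tv κ i₀ (Ne.symm hne) (A.1 i₀ κ) * A with hB1
          have hB1mat : B1.1 = transvection κ i₀ (A.1 i₀ κ) * A.1 := rfl
          have hB1κ : B1.1 κ κ = 1 := by
            rw [hB1mat, transvection_mul_apply_same, hAκκ, zero_add]; exact hvv
          have hB1o : ∀ i : Fin n, i ≠ κ → B1.1 i κ = A.1 i κ := fun i hiκ2 => by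
            rw [hB1mat, transvection_mul_apply_of_ne _ _ _ _ hiκ2]
          set B2 := tv i₀ κ hne (-(A.1 i₀ κ)) * B1 with hB2
          have hB2mat : B2.1 = transvection i₀ κ (-(A.1 i₀ κ)) * B1.1 := rfl
          have hB2i : B2.1 i₀ κ = 0 := by
            rw [hB2mat, transvection_mul_apply_same, hB1o i₀ hne, hB1κ]; ring
          have hB2o : ∀ i : Fin n, i ≠ i₀ → B2.1 i κ = B1.1 i κ := fun i hii => by
            rw [hB2mat, transvection_mul_apply_of_ne _ _ _ _ hii]
          have hcol2 : ∀ i : Fin n, B2.1 i κ = if i = κ then 1 else 0 := by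
            intro i
            rcases eq_or_ne i i₀ with rfl | hii
            · rw [hB2i, if_neg hne]
            · rw [hB2o i hii]
              rcases eq_or_ne i κ with rfl | hiκ2
              · rw [hB1κ, if_pos rfl]
              · rw [hB1o i hiκ2, hzero i hii, if_neg hiκ2]
          have hκk' : k ≤ (κ : ℕ) := le_of_eq rfl
          have hid2 : Id1 k B2 :=
            id1_left hne hi₀k hκk' _ (id1_left (Ne.symm hne) hκk' hi₀k _ hA)
          have h2H : B2 ∈ H := rowstep H hT hkn next _ B2 rfl hid2 hcol2
          rw [hB2] at h2H
          have h1H : B1 ∈ H := (H.mul_mem_cancel_left (hT i₀ κ hne _)).mp h2H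
          rw [hB1] at h1H
          exact (H.mul_mem_cancel_left (hT κ i₀ (Ne.symm hne) _)).mp h1H

/-- Any subgroup of `SL(n, ℤ)` containing all transvections is everything. -/
lemma mem_of_tv (H : Subgroup (SL n))
    (hT : ∀ (i j : Fin n) (hij : i ≠ j) (c : ℤ), tv i j hij c ∈ H) (A : SL n) : A ∈ H := by
  suffices h : ∀ d k : ℕ, n ≤ k + d → ∀ A : SL n, Id1 k A → A ∈ H by
    exact h n 0 (by omega) A (fun i j hij => absurd hij (by omega))
  intro d
  induction d with
  | zero =>
    intro k hk A hA
    have hA1 : A = 1 := by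
      apply Subtype.ext
      ext i j
      rw [hA i j (Or.inl (by omega)), Matrix.SpecialLinearGroup.coe_one, Matrix.one_apply]
    rw [hA1]
    exact H.one_mem
  | succ d ih =>
    intro k hk A hA
    by_cases hkd : n ≤ k + d
    · exact ih k hkd A hA
    · have hkn : k < n := by omega
      exact colstep H hT hkn (fun B hB => ih (k + 1) (by omega) B hB) _ A rfl hA

end SL3Perfect


/-- For n ≥ 3, SL(n,ℤ) is perfect. -/
theorem stmt_5 (n : ℕ) (hn : 3 ≤ n) :
    commutator (Matrix.SpecialLinearGroup (Fin n) ℤ) = ⊤ := by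
  rw [Subgroup.eq_top_iff']
  intro A
  exact SL3Perfect.mem_of_tv _ (fun i j hij c => SL3Perfect.tv_mem hn i j hij c) A
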